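/- Let ℚ carry its standard (order) topology and let C ℚ be the cone on ℚ, equipped with the quotient topology. Then the translation action map ℚ × C ℚ → C ℚ, sending (q, [x,t]) to [q+x, t] (which is well defined), is not continuous, where ℚ × C ℚ carries the product topology. -/
import Mathlib


open Set

/-- The cone relation on `X × [0,1]`: identify `(x,0) ~ (x',0)`.  The cone
`C X` is the quotient by (the equivalence relation generated by) this
relation, with the quotient topology. -/
abbrev coneRel (X : Type*) : X × Icc (0 : ℝ) 1 → X × Icc (0 : ℝ) 1 → Prop :=
  fun p q => p = q ∨ ((p.2 : ℝ) = 0 ∧ (q.2 : ℝ) = 0)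

/-- The cone `C X` with the quotient topology. -/
abbrev Cone (X : Type*) := Quot (coneRel X)

/-- The translation action `ℚ × C ℚ → C ℚ`, `(q, [x,t]) ↦ [q+x, t]`. -/
def coneTranslate : ℚ × Cone ℚ → Cone ℚ := fun p =>
  Quot.lift
    (fun x : ℚ × Icc (0 : ℝ) 1 => Quot.mk (coneRel ℚ) (p.1 + x.1, x.2))
    (by
      rintro a b (rfl | ⟨h0a, h0b⟩)
      · rfl
      · exact Quot.sound (Or.inr ⟨h0a, h0b⟩))
    p.2

/-- The height function for our saturated open set. -/
noncomputable def fA : ℚ → ℝ := fun x => min |(x : ℝ) - Real.sqrt 2| 1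

lemma fA_pos (x : ℚ) : 0 < fA x := by
  apply lt_min _ one_pos
  rw [abs_pos, sub_ne_zero]
  exact fun h => irrational_sqrt_two ⟨x, h⟩

lemma fA_le (x : ℚ) : fA x ≤ |(x : ℝ) - Real.sqrt 2| := min_le_left _ _

lemma fA_continuous : Continuous fA :=
  ((Rat.continuous_coe_real.sub continuous_const).abs).min continuous_const

/-- The generated equivalence relation collapses back to `coneRel`. -/
lemma eqvGen_coneRel {p q : ℚ × Icc (0 : ℝ) 1}
    (h : Relation.EqvGen (coneRel ℚ) p q) : coneRel ℚ p q := by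
  induction h with
  | rel _ _ h => exact h
  | refl _ => exact Or.inl rfl
  | symm _ _ _ ih =>
      rcases ih with rfl | ⟨h1, h2⟩
      · exact Or.inl rfl
      · exact Or.inr ⟨h2, h1⟩
  | trans _ _ _ _ _ ih1 ih2 =>
      rcases ih1 with rfl | ⟨h1, h2⟩
      · exact ih2
      · rcases ih2 with rfl | ⟨h3, h4⟩
        · exact Or.inr ⟨h1, h2⟩
        · exact Or.inr ⟨h1, h4⟩

/-- The open set below the graph of `fA`. -/
def setA : Set (ℚ × Icc (0 : ℝ) 1) := {p | (p.2 : ℝ) < fA p.1}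

lemma setA_open : IsOpen setA :=
  isOpen_lt (continuous_subtype_val.comp continuous_snd) (fA_continuous.comp continuous_fst)

lemma setA_saturated :
    Quot.mk (coneRel ℚ) ⁻¹' (Quot.mk (coneRel ℚ) '' setA) = setA := by
  ext p
  constructor
  · rintro ⟨a, ha, h⟩
    rcases eqvGen_coneRel (Quot.eqvGen_exact h) with rfl | ⟨h1, h2⟩
    · exact ha
    · show (p.2 : ℝ) < fA p.1
      rw [h2]; exact fA_pos _
  · intro hp
    exact ⟨p, hp, rfl⟩

/-- The translation action of `ℚ` on its quotient-topologized cone `C ℚ`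
is not continuous. -/
theorem coneTranslate_not_continuous : ¬ Continuous coneTranslate := by
  intro hc
  -- U is open in the cone
  set U : Set (Cone ℚ) := Quot.mk (coneRel ℚ) '' setA with hU
  have hUopen : IsOpen U := by
    rw [isOpen_coinduced, setA_saturated]
    exact setA_open
  -- the apex
  set z0 : Icc (0 : ℝ) 1 := ⟨0, le_refl 0, zero_le_one⟩ with hz0
  set apex : Cone ℚ := Quot.mk (coneRel ℚ) (0, z0) with hapex
  have hmem : ((0 : ℚ), apex) ∈ coneTranslate ⁻¹' U := by
    refine ⟨(0 + 0, z0), ?_, rfl⟩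
    show ((z0 : ℝ)) < fA (0 + 0)
    exact fA_pos _
  have hpre : IsOpen (coneTranslate ⁻¹' U) := hUopen.preimage hc
  rcases isOpen_prod_iff.mp hpre 0 apex hmem with ⟨W, V, hW, hV, hW0, hVapex, hsub⟩
  -- get δ for W
  rcases Metric.isOpen_iff.mp hW 0 hW0 with ⟨δ, hδ, hball⟩
  -- choose x rational near √2
  obtain ⟨x, hx1, hx2⟩ := exists_rat_btwn (show Real.sqrt 2 < Real.sqrt 2 + δ / 2 by linarith)
  -- (x, 0) ∈ preimage of V
  have hxV : (x, z0) ∈ Quot.mk (coneRel ℚ) ⁻¹' V := by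
    show Quot.mk (coneRel ℚ) (x, z0) ∈ V
    have : Quot.mk (coneRel ℚ) (x, z0) = apex := Quot.sound (Or.inr ⟨rfl, rfl⟩)
    rw [this]; exact hVapex
  -- slice openness in the Icc direction
  have hslice : IsOpen ((fun t : Icc (0 : ℝ) 1 => (x, t)) ⁻¹' (Quot.mk (coneRel ℚ) ⁻¹' V)) :=
    ((hV.preimage continuous_quot_mk).preimage (continuous_const.prodMk continuous_id))
  rcases Metric.isOpen_iff.mp hslice z0 hxV with ⟨ε, hε, hballε⟩
  -- the height t
  set t : ℝ := min ε 1 / 2 with ht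
  have ht0 : 0 < t := by positivity
  have htε : t < ε := by
    have : min ε 1 ≤ ε := min_le_left _ _
    simp only [ht]; linarith
  have ht1 : t ≤ 1 := by
    have : min ε 1 ≤ 1 := min_le_right _ _
    simp only [ht]; linarith
  -- choose q rational near √2 - x
  set η : ℝ := min (δ / 2) t with hη
  have hηpos : 0 < η := lt_min (by linarith) ht0
  obtain ⟨q, hq1, hq2⟩ := exists_rat_btwn
    (show Real.sqrt 2 - (x : ℝ) < Real.sqrt 2 - (x : ℝ) + η by linarith)
  have hxα : |(x : ℝ) - Real.sqrt 2| < δ / 2 := by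
    rw [abs_lt]; constructor <;> linarith
  have hqδ : |(q : ℝ)| < δ := by
    have h1 : η ≤ δ / 2 := min_le_left _ _
    rw [abs_lt]; constructor <;> linarith
  have hqW : q ∈ W := by
    apply hball
    rw [Metric.mem_ball, Rat.dist_eq]
    push_cast
    simpa using hqδ
  -- the point of the cone
  have htIcc : t ∈ Icc (0 : ℝ) 1 := ⟨le_of_lt ht0, ht1⟩
  have htV : (x, (⟨t, htIcc⟩ : Icc (0 : ℝ) 1)) ∈ Quot.mk (coneRel ℚ) ⁻¹' V := by
    apply hballε
    simp only [Metric.mem_ball, Subtype.dist_eq]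
    simpa [hz0, Real.dist_eq, abs_of_pos ht0] using htε
  have hpt : (q, Quot.mk (coneRel ℚ) (x, ⟨t, htIcc⟩)) ∈ coneTranslate ⁻¹' U :=
    hsub ⟨hqW, htV⟩
  -- unfold the membership: coneTranslate sends it to [q+x, t]
  have hmem2 : Quot.mk (coneRel ℚ) (q + x, (⟨t, htIcc⟩ : Icc (0 : ℝ) 1)) ∈ U := hpt
  have hA : (q + x, (⟨t, htIcc⟩ : Icc (0 : ℝ) 1)) ∈ setA := by
    rw [← setA_saturated]; exact hmem2
  -- contradiction: t < fA (q + x) but fA (q + x) ≤ |q + x - √2| < t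
  have hlt : (t : ℝ) < fA (q + x) := hA
  have hge : fA (q + x) < t := by
    calc fA (q + x) ≤ |((q + x : ℚ) : ℝ) - Real.sqrt 2| := fA_le _
    _ < t := by
        push_cast
        have hηt : η ≤ t := min_le_right _ _
        rw [abs_lt]; constructor <;> linarith
  linarith
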